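/- A bounded operator R : H²(∂𝔹) → H²₋(∂𝔹) is a Hankel operator (i.e. R = H_φ for some φ ∈ L^∞ₛ(∂𝔹), equivalently its matrix (⟨Rq^j, \bar q^k⟩) satisfies ⟨Rq^j, \bar q^k⟩ = ⟨Rq^{j-1}, \bar q^{k+1}⟩ for all j ≥ 1, k ≥ 1) if and only if ℙ₋ S R = R T, where S is the bilateral shift (Sf)(q) = q f(q) on L²ₛ(∂𝔹) and T the unilateral shift (Tf)(q) = q f(q) on H²(∂𝔹). -/

import Mathlib

noncomputable section

open Quaternion

/-- `ℓ²(ℕ, ℍ)`, modelling both `H²(∂𝔹)` (via the coefficients of `qʲ`, `j ≥ 0`) and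
`H²₋(∂𝔹)` (via the coefficients of `q^{-(m+1)}`, `m ≥ 0`) inside `L²ₛ(∂𝔹) ≅ ℓ²(ℤ, ℍ)`. -/
abbrev l2H := lp (fun _ : ℕ => Quaternion ℝ) 2

/-- Characterization of Hankel operators by the shift: a bounded (right `ℍ`-linear) operator
`R : H²(∂𝔹) → H²₋(∂𝔹)` is a Hankel operator (its matrix has constant antidiagonals:
`⟨R qʲ, q̄ᵏ⟩ = ⟨R q^{j-1}, q̄^{k+1}⟩` for `j, k ≥ 1`) iff `ℙ₋ S R = R T`, where `S` is the
bilateral shift `(Sf)(q) = q f(q)` on `L²ₛ(∂𝔹)` and `T` the unilateral shift on `H²(∂𝔹)`.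
In coefficients: `ℙ₋ S` acts on `H²₋` by `w ↦ (m ↦ w (m+1))` and `T` acts on `H²` by
prepending a zero coefficient. -/
theorem hankel_iff_shift_relation (R : l2H → l2H)
    (hadd : ∀ a b : l2H, R (a + b) = R a + R b)
    (hlin : ∀ (a b : l2H) (p : Quaternion ℝ),
      (∀ n : ℕ, b n = a n * p) → ∀ n : ℕ, (R b) n = (R a) n * p)
    (hbdd : ∃ C : ℝ, ∀ a : l2H, ‖R a‖ ≤ C * ‖a‖) :
    (∀ j k : ℕ, (R (lp.single 2 (j + 1) (1 : Quaternion ℝ))) k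
        = (R (lp.single 2 j (1 : Quaternion ℝ))) (k + 1))
    ↔
    (∀ a b : l2H, b 0 = 0 → (∀ j : ℕ, b (j + 1) = a j) →
      ∀ m : ℕ, (R b) m = (R a) (m + 1)) := by
  constructor
  · intro h a b hb0 hbs m
    -- R is additive and bounded, hence continuous
    have hR0 : R 0 = 0 := by
      have := hadd 0 0
      simpa using this
    have hneg : ∀ a : l2H, R (-a) = -(R a) := by
      intro a
      refine lp.ext (funext fun n => ?_)
      have := hlin a (-a) (-1) (fun n => by
        simp [lp.coeFn_neg]) n
      simpa [lp.coeFn_neg, Pi.neg_apply] using this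
    have hsub : ∀ a b : l2H, R (a - b) = R a - R b := by
      intro a b
      rw [sub_eq_add_neg, hadd, hneg, sub_eq_add_neg]
    obtain ⟨C, hC⟩ := hbdd
    have hcont : Continuous R := by
      have : LipschitzWith (Real.toNNReal C) R := by
        refine LipschitzWith.of_dist_le_mul fun x y => ?_
        rw [dist_eq_norm, dist_eq_norm, ← hsub]
        calc ‖R (x - y)‖ ≤ C * ‖x - y‖ := hC _
          _ ≤ (Real.toNNReal C) * ‖x - y‖ := by
              gcongr
              exact Real.le_coe_toNNReal C
      exact this.continuous
    set G : l2H →+ l2H := AddMonoidHom.mk' R hadd with hG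
    -- evaluation maps
    have heval : ∀ i : ℕ, Continuous (fun f : l2H => f i) := by
      intro i
      have : LipschitzWith 1 (fun f : l2H => f i) := by
        refine LipschitzWith.of_dist_le_mul fun x y => ?_
        rw [dist_eq_norm, dist_eq_norm]
        have : ‖(x - y) i‖ ≤ ‖x - y‖ :=
          lp.norm_apply_le_norm (by norm_num) (x - y) i
        simpa [lp.coeFn_sub, Pi.sub_apply] using this.trans (by simp)
      exact this.continuous
    -- a is a sum of singles
    have ha : HasSum (fun j : ℕ => lp.single 2 j (a j)) a :=
      lp.hasSum_single (by norm_num) a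
    -- b is a sum of shifted singles
    have hb : HasSum (fun j : ℕ => lp.single 2 (j + 1) (a j)) b := by
      have hb' : HasSum (fun i : ℕ => lp.single 2 i (b i)) b :=
        lp.hasSum_single (by norm_num) b
      have hinj : Function.Injective (fun j : ℕ => j + 1) := fun x y hxy => by simpa using hxy
      have h0 : ∀ i ∉ Set.range (fun j : ℕ => j + 1),
          (lp.single 2 i (b i) : l2H) = 0 := by
        intro i hi
        have : i = 0 := by
          by_contra hne
          exact hi ⟨i - 1, show i - 1 + 1 = i by omega⟩
        subst this
        rw [hb0]
        refine lp.ext (funext fun n => ?_)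
        by_cases hn : n = 0
        · subst hn; simp [lp.single_apply_self]
        · simp [lp.single_apply, hn]
      have := (hinj.hasSum_iff h0).2 hb'
      convert this using 2 with j
      simp [hbs j]
    -- push through R
    have hGa : HasSum (fun j : ℕ => R (lp.single 2 j (a j))) (R a) :=
      ha.map G hcont
    have hGb : HasSum (fun j : ℕ => R (lp.single 2 (j + 1) (a j))) (R b) :=
      hb.map G hcont
    -- evaluate
    set e : ∀ i : ℕ, l2H →+ Quaternion ℝ := fun i =>
      AddMonoidHom.mk' (fun f : l2H => f i) (fun f g => by
        simp [lp.coeFn_add, Pi.add_apply]) with he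
    have hEa : HasSum (fun j : ℕ => (R (lp.single 2 j (a j))) (m + 1)) ((R a) (m + 1)) :=
      hGa.map (e (m + 1)) (heval (m + 1))
    have hEb : HasSum (fun j : ℕ => (R (lp.single 2 (j + 1) (a j))) m) ((R b) m) :=
      hGb.map (e m) (heval m)
    -- termwise equality
    have hterm : ∀ j : ℕ,
        (R (lp.single 2 (j + 1) (a j))) m = (R (lp.single 2 j (a j))) (m + 1) := by
      intro j
      have h1 : ∀ n : ℕ, (lp.single 2 (j + 1) (a j) : l2H) n
          = (lp.single 2 (j + 1) (1 : Quaternion ℝ) : l2H) n * a j := by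
        intro n
        by_cases hn : n = j + 1
        · subst hn; simp [lp.single_apply_self]
        · rw [lp.single_apply_ne 2 _ _ hn, lp.single_apply_ne 2 _ _ hn, zero_mul]
      have h2 : ∀ n : ℕ, (lp.single 2 j (a j) : l2H) n
          = (lp.single 2 j (1 : Quaternion ℝ) : l2H) n * a j := by
        intro n
        by_cases hn : n = j
        · subst hn; simp [lp.single_apply_self]
        · rw [lp.single_apply_ne 2 _ _ hn, lp.single_apply_ne 2 _ _ hn, zero_mul]
      rw [hlin _ _ (a j) h1 m, hlin _ _ (a j) h2 (m + 1), h j m]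
    rw [show (fun j : ℕ => (R (lp.single 2 (j + 1) (a j))) m)
        = (fun j : ℕ => (R (lp.single 2 j (a j))) (m + 1)) from funext hterm] at hEb
    exact hEb.unique hEa
  · intro h j k
    refine h (lp.single 2 j (1 : Quaternion ℝ)) (lp.single 2 (j + 1) (1 : Quaternion ℝ))
      (lp.single_apply_ne 2 (j + 1) _ (by omega)) (fun n => ?_) k
    by_cases hn : n = j
    · subst hn; simp [lp.single_apply_self]
    · rw [lp.single_apply_ne 2 _ _ (by omega : n + 1 ≠ j + 1),
        lp.single_apply_ne 2 _ _ hn]
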